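/- arXiv:2211.05835 — 3 statements merged into one kernel-verified Lean document; each statement's English description precedes it below -/
import Mathlib

section
/- Let r₁, r₂ : [0,T) → ℝ be differentiable with r₁ increasing and positive, r₂ decreasing and positive on (0,T), and suppose r₂(t) → 0, r₁(t)·r₂(t) stays bounded, and r₁(t)/r₂(t) → ∞ as t → T. If additionally 0 ≤ r₁'(t)/|r₂'(t)| ≤ r₁(t)/r₂(t) for t near T and r₁(t) r₂(t) → L ∈ ℝ as t → T, then r₁'(t) r₂(t)² / (r₁'(t) r₂(t) − r₁(t) r₂'(t)) → 0 as t → T. -/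
open Set Filter

/-- Derivative of a strictly antitone function on an open interval is nonpositive. -/
lemma strictAntiOn_deriv_nonpos {a b t f' : ℝ} {f : ℝ → ℝ}
    (hf : StrictAntiOn f (Ioo a b)) (ht : t ∈ Ioo a b) (hd : HasDerivAt f f' t) :
    f' ≤ 0 := by
  by_contra h
  push_neg at h
  have hslope : Tendsto (slope f t) (nhdsWithin t {t}ᶜ) (nhds f') :=
    hasDerivAt_iff_tendsto_slope.1 hd
  have hslope' : Tendsto (slope f t) (nhdsWithin t (Ioi t)) (nhds f') :=
    hslope.mono_left (nhdsWithin_mono t (fun x hx => ne_of_gt hx))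
  have hpos : ∀ᶠ u in nhdsWithin t (Ioi t), 0 < slope f t u :=
    hslope'.eventually (eventually_gt_nhds h)
  have hin : ∀ᶠ u in nhdsWithin t (Ioi t), u ∈ Ioo a b := by
    apply eventually_nhdsWithin_of_eventually_nhds
    exact isOpen_Ioo.eventually_mem ht
  have hu : ∀ᶠ u in nhdsWithin t (Ioi t), u ∈ Ioi t := self_mem_nhdsWithin
  have : ∃ u, 0 < slope f t u ∧ u ∈ Ioo a b ∧ u ∈ Ioi t := by
    rcases (hpos.and (hin.and hu)).exists with ⟨u, h1, h2, h3⟩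
    exact ⟨u, h1, h2, h3⟩
  rcases this with ⟨u, h1, h2, h3⟩
  have htu : (0:ℝ) < u - t := sub_pos.2 h3
  have : f t < f u := by
    have := h1
    rw [slope_def_field] at this
    have := mul_pos this htu
    rw [div_mul_cancel₀] at this
    · linarith
    · exact ne_of_gt htu
  exact absurd (hf ht h2 h3) (not_lt.2 this.le)

/-- Limit computation showing `lim_{s→∞} a₂'(s)·s = 0` expressed in terms of the
covariance factorization `r₁, r₂` of a Gauss–Markov bridge:
`r₁' r₂² / (r₁' r₂ − r₁ r₂') → 0` as `t → T⁻`. -/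
theorem covariance_factorization_limit
    (T : ℝ) (hT : 0 < T) (r₁ r₂ r₁' r₂' : ℝ → ℝ)
    (hd₁ : ∀ t ∈ Ico (0 : ℝ) T, HasDerivAt r₁ (r₁' t) t)
    (hd₂ : ∀ t ∈ Ico (0 : ℝ) T, HasDerivAt r₂ (r₂' t) t)
    (h₁mono : StrictMonoOn r₁ (Ioo 0 T))
    (h₁pos : ∀ t ∈ Ioo (0 : ℝ) T, 0 < r₁ t)
    (h₂anti : StrictAntiOn r₂ (Ioo 0 T))
    (h₂pos : ∀ t ∈ Ioo (0 : ℝ) T, 0 < r₂ t)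
    (h₂lim : Tendsto r₂ (nhdsWithin T (Iio T)) (nhds 0))
    (hbdd : ∃ M : ℝ, ∀ t ∈ Ioo (0 : ℝ) T, |r₁ t * r₂ t| ≤ M)
    (hratio : Tendsto (fun t => r₁ t / r₂ t) (nhdsWithin T (Iio T)) atTop)
    (hderiv_ratio : ∀ᶠ t in nhdsWithin T (Iio T),
      0 ≤ r₁' t / |r₂' t| ∧ r₁' t / |r₂' t| ≤ r₁ t / r₂ t)
    (L : ℝ)
    (hprod : Tendsto (fun t => r₁ t * r₂ t) (nhdsWithin T (Iio T)) (nhds L)) :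
    Tendsto (fun t => r₁' t * (r₂ t) ^ 2 / (r₁' t * r₂ t - r₁ t * r₂' t))
      (nhdsWithin T (Iio T)) (nhds 0) := by
  have hev : ∀ᶠ t in nhdsWithin T (Iio T), t ∈ Ioo 0 T := by
    have h1 : ∀ᶠ t in nhdsWithin T (Iio T), t ∈ Iio T := self_mem_nhdsWithin
    have h2 : ∀ᶠ t in nhdsWithin T (Iio T), (0:ℝ) < t :=
      eventually_nhdsWithin_of_eventually_nhds (eventually_gt_nhds hT)
    filter_upwards [h1, h2] with t ht h0 using ⟨h0, ht⟩
  have key : ∀ᶠ t in nhdsWithin T (Iio T),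
      0 ≤ r₁' t * (r₂ t) ^ 2 / (r₁' t * r₂ t - r₁ t * r₂' t) ∧
      r₁' t * (r₂ t) ^ 2 / (r₁' t * r₂ t - r₁ t * r₂' t) ≤ r₂ t := by
    filter_upwards [hev, hderiv_ratio] with t ht hdr
    have h1 : 0 < r₁ t := h₁pos t ht
    have h2 : 0 < r₂ t := h₂pos t ht
    have h2' : r₂' t ≤ 0 :=
      strictAntiOn_deriv_nonpos h₂anti ht (hd₂ t ⟨le_of_lt ht.1, ht.2⟩)
    by_cases hz : r₂' t = 0
    · simp only [hz, mul_zero, sub_zero]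
      by_cases hz1 : r₁' t = 0
      · simp [hz1, h2.le]
      · have : r₁' t * r₂ t ^ 2 / (r₁' t * r₂ t) = r₂ t := by
          field_simp
        rw [this]
        exact ⟨h2.le, le_refl _⟩
    · have habs : 0 < |r₂' t| := abs_pos.2 hz
      have habs' : |r₂' t| = -(r₂' t) := abs_of_nonpos h2'
      have h1' : 0 ≤ r₁' t := by
        have h := mul_nonneg hdr.1 habs.le
        rwa [div_mul_cancel₀ _ (ne_of_gt habs)] at h
      have hD : 0 < r₁' t * r₂ t - r₁ t * r₂' t := by
        have hpos := mul_pos h1 habs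
        rw [habs'] at hpos
        nlinarith [mul_nonneg h1' h2.le]
      constructor
      · exact div_nonneg (mul_nonneg h1' (sq_nonneg _)) hD.le
      · rw [div_le_iff₀ hD]
        nlinarith [mul_nonneg (mul_nonneg h2.le h1.le) (neg_nonneg.2 h2')]
  exact tendsto_of_tendsto_of_tendsto_of_le_of_le' tendsto_const_nhds h₂lim
    (key.mono fun t h => h.1) (key.mono fun t h => h.2)
end

section
/- Let b : [0,∞) → ℝ be locally Lipschitz, s ≥ 0, and let Y be a standard Brownian motion started at Y_s = b(s) at time s. Then almost surely, inf{u > 0 : Y_{s+u} > b(s+u)} = 0; that is, the process immediately crosses above the boundary b. -/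
open MeasureTheory ProbabilityTheory

/-- A standard Brownian motion on a probability space. -/
structure IsStandardBM {Ω : Type*} [MeasurableSpace Ω] (μ : Measure Ω)
    (Y : ℝ → Ω → ℝ) : Prop where
  meas : ∀ t, Measurable (Y t)
  init : ∀ᵐ ω ∂μ, Y 0 ω = 0
  cont : ∀ᵐ ω ∂μ, Continuous fun t => Y t ω
  incr_law : ∀ s t : ℝ, 0 ≤ s → s ≤ t →
    μ.map (fun ω => Y t ω - Y s ω) = gaussianReal 0 (Real.toNNReal (t - s))
  indep_incr : ∀ s t u v : ℝ, 0 ≤ s → s ≤ t → t ≤ u → u ≤ v →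
    IndepFun (fun ω => Y t ω - Y s ω) (fun ω => Y v ω - Y u ω) μ

section AuxLemmas
open Set Real Filter Topology
open scoped NNReal ENNReal

lemma aux_sqrt_two_le : Real.sqrt 2 ≤ 3/2 := by
  nlinarith [Real.sq_sqrt (by norm_num : (2:ℝ) ≥ 0), Real.sqrt_nonneg 2,
    sq_nonneg (Real.sqrt 2 - 3/2)]

lemma gauss_Ioi_lower {v : ℝ≥0} (hv : 0 < (v:ℝ)) {a : ℝ} (ha : 0 ≤ a) (h2 : a^2 ≤ 2*v) :
    ENNReal.ofReal (Real.exp (-3) / Real.sqrt (2*Real.pi)) ≤ gaussianReal 0 v (Set.Ioi a) := by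
  have hv0 : v ≠ 0 := by
    intro h; rw [h] at hv; simp at hv
  rw [gaussianReal_apply_eq_integral 0 hv0]
  apply ENNReal.ofReal_le_ofReal
  set sv := Real.sqrt v with hsv_def
  have hsv : 0 < sv := Real.sqrt_pos.mpr hv
  have hsv2 : sv^2 = v := Real.sq_sqrt hv.le
  have hsplit : Real.sqrt (2*Real.pi*(v:ℝ)) = Real.sqrt (2*Real.pi) * sv := by
    rw [hsv_def, ← Real.sqrt_mul (by positivity)]
  have hs2pi : 0 < Real.sqrt (2*Real.pi) := Real.sqrt_pos.mpr (by positivity)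
  have key : ∀ x ∈ Set.Ioc a (a + sv),
      Real.exp (-3) / (Real.sqrt (2*Real.pi) * sv) ≤ gaussianPDFReal 0 v x := by
    intro x hx
    have hx0 : 0 ≤ x := le_trans ha hx.1.le
    have hasv : a ≤ Real.sqrt 2 * sv := by
      have : a = Real.sqrt (a^2) := (Real.sqrt_sq ha).symm
      rw [this, hsv_def, ← Real.sqrt_mul (by norm_num)]
      exact Real.sqrt_le_sqrt h2
    have hx6 : x^2 ≤ 6*v := by
      have hxs : x^2 ≤ (a+sv)^2 := by nlinarith [hx.2, hx.1.le]
      nlinarith [aux_sqrt_two_le, Real.sqrt_nonneg 2, hsv.le, hsv2, ha]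
    have hexp : Real.exp (-3) ≤ Real.exp (-(x-0)^2/(2*v)) := by
      apply Real.exp_le_exp.mpr
      rw [sub_zero, neg_div]
      rw [neg_le_neg_iff, div_le_iff₀ (by positivity)]
      linarith
    rw [gaussianPDFReal, hsplit, div_eq_inv_mul]
    exact mul_le_mul_of_nonneg_left hexp (by positivity)
  have hIoc : ∫ x in Set.Ioc a (a+sv), gaussianPDFReal 0 v x ≤
      ∫ x in Set.Ioi a, gaussianPDFReal 0 v x := by
    apply setIntegral_mono_set ((integrable_gaussianPDFReal 0 v).integrableOn)
      (ae_of_all _ fun x => gaussianPDFReal_nonneg 0 v x)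
    exact HasSubset.Subset.eventuallyLE Set.Ioc_subset_Ioi_self
  refine le_trans ?_ hIoc
  have hconst : ∫ _x in Set.Ioc a (a+sv), (Real.exp (-3) / (Real.sqrt (2*Real.pi) * sv)) =
      Real.exp (-3) / Real.sqrt (2*Real.pi) := by
    rw [setIntegral_const, Measure.real, Real.volume_Ioc]
    rw [show a + sv - a = sv by ring, ENNReal.toReal_ofReal hsv.le, smul_eq_mul]
    field_simp
  rw [← hconst]
  exact setIntegral_mono_on (integrableOn_const (by rw [Real.volume_Ioc]; exact ENNReal.ofReal_ne_top))
    ((integrable_gaussianPDFReal 0 v).integrableOn) measurableSet_Ioc key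

lemma gauss_Ici_upper {v : ℝ≥0} (hv : 0 < (v:ℝ)) {a : ℝ} (ha : 0 < a) :
    gaussianReal 0 v (Set.Ici a) ≤ ENNReal.ofReal (Real.sqrt v / a) := by
  have hv0 : v ≠ 0 := by intro h; rw [h] at hv; simp at hv
  rw [gaussianReal_apply_eq_integral 0 hv0]
  apply ENNReal.ofReal_le_ofReal
  set sv := Real.sqrt v with hsv_def
  have hsv : 0 < sv := Real.sqrt_pos.mpr hv
  have hsv2 : sv^2 = v := Real.sq_sqrt hv.le
  have hsplit : Real.sqrt (2*Real.pi*(v:ℝ)) = Real.sqrt (2*Real.pi) * sv := by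
    rw [hsv_def, ← Real.sqrt_mul (by positivity)]
  have hs2pi : (2:ℝ) ≤ Real.sqrt (2*Real.pi) := by
    have h4 : (4:ℝ) ≤ 2*Real.pi := by nlinarith [Real.pi_gt_three]
    nlinarith [Real.sq_sqrt (by positivity : (0:ℝ) ≤ 2*Real.pi),
      Real.sqrt_nonneg (2*Real.pi), sq_nonneg (Real.sqrt (2*Real.pi) - 2)]
  set b := a/(2*(v:ℝ)) with hb_def
  have hb : 0 < b := by positivity
  have hgInt : IntegrableOn (fun x => (Real.sqrt (2*Real.pi*(v:ℝ)))⁻¹ * Real.exp (-(b*x)))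
      (Set.Ici a) volume := by
    rw [integrableOn_Ici_iff_integrableOn_Ioi]
    simpa [neg_mul, IntegrableOn] using ((exp_neg_integrableOn_Ioi a hb).const_mul (Real.sqrt (2*Real.pi*(v:ℝ)))⁻¹)
  have hpt : ∀ x ∈ Set.Ici a, gaussianPDFReal 0 v x ≤
      (Real.sqrt (2*Real.pi*(v:ℝ)))⁻¹ * Real.exp (-(b*x)) := by
    intro x hx
    rw [Set.mem_Ici] at hx
    have hax : a*x ≤ x*x := mul_le_mul_of_nonneg_right hx (ha.le.trans hx)
    rw [gaussianPDFReal]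
    apply mul_le_mul_of_nonneg_left _ (by positivity)
    apply Real.exp_le_exp.mpr
    rw [sub_zero, neg_div, neg_le_neg_iff, hb_def, div_mul_eq_mul_div,
      div_le_div_iff₀ (by positivity) (by positivity)]
    nlinarith [hax, hv]
  have hstep : ∫ x in Set.Ici a, gaussianPDFReal 0 v x ≤
      ∫ x in Set.Ici a, (Real.sqrt (2*Real.pi*(v:ℝ)))⁻¹ * Real.exp (-(b*x)) :=
    setIntegral_mono_on ((integrable_gaussianPDFReal 0 v).integrableOn) hgInt
      measurableSet_Ici hpt
  have hexpeval : ∫ x in Set.Ioi a, Real.exp (-(b*x)) = b⁻¹ * Real.exp (-(b*a)) := by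
    calc ∫ x in Set.Ioi a, Real.exp (-(b*x))
        = b⁻¹ • ∫ x in Set.Ioi (b*a), Real.exp (-x) := by
          simpa using integral_comp_mul_left_Ioi (fun y => Real.exp (-y)) a hb
      _ = b⁻¹ * Real.exp (-(b*a)) := by rw [integral_exp_neg_Ioi, smul_eq_mul]
  have heval : ∫ x in Set.Ici a, (Real.sqrt (2*Real.pi*(v:ℝ)))⁻¹ * Real.exp (-(b*x))
      = (Real.sqrt (2*Real.pi*(v:ℝ)))⁻¹ * (b⁻¹ * Real.exp (-(b*a))) := by
    rw [integral_Ici_eq_integral_Ioi, integral_const_mul, hexpeval]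
  refine le_trans hstep (le_trans (le_of_eq heval) ?_)
  have hexp1 : Real.exp (-(b*a)) ≤ 1 := Real.exp_le_one_iff.mpr (neg_nonpos.mpr (by positivity))
  have hbinv : b⁻¹ = 2*(v:ℝ)/a := by rw [hb_def]; field_simp
  set e := Real.exp (-(b*a)) with he_def
  have hepos : 0 < e := Real.exp_pos _
  have hSe : (0:ℝ) ≤ Real.sqrt (2*Real.pi) - 2*e := by linarith
  rw [hsplit, hbinv]
  have h1 : (Real.sqrt (2*Real.pi) * sv)⁻¹ * (2*(v:ℝ)/a*e)
      = (2*(v:ℝ)*e)/(Real.sqrt (2*Real.pi)*sv*a) := by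
    field_simp
  rw [h1, div_le_div_iff₀ (by positivity) ha, ← hsv2]
  nlinarith [mul_nonneg (mul_nonneg (sq_nonneg sv) ha.le) hSe]

lemma gauss_Iic_neg {v : ℝ≥0} (a : ℝ) :
    gaussianReal 0 v (Set.Iic (-a)) = gaussianReal 0 v (Set.Ici a) := by
  have hmap := gaussianReal_map_const_mul (μ := 0) (v := v) (-1)
  have h1 : (NNReal.mk ((-1:ℝ)^2) (sq_nonneg _)) = 1 := by ext; norm_num
  rw [h1, one_mul, mul_zero] at hmap
  conv_lhs => rw [← hmap]
  rw [Measure.map_apply (by fun_prop : Measurable fun x : ℝ => (-1:ℝ)*x) measurableSet_Iic]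
  congr 1
  ext x
  simp only [Set.mem_preimage, Set.mem_Iic, Set.mem_Ici, neg_mul, one_mul]
  constructor <;> intro h <;> linarith

lemma pairwise_bc {Ω : Type*} [MeasurableSpace Ω] (μ : Measure Ω) [IsProbabilityMeasure μ]
    (A : ℕ → Set Ω) (hA : ∀ n, MeasurableSet (A n))
    (hind : ∀ i j, i ≠ j → μ (A i ∩ A j) = μ (A i) * μ (A j))
    (p₀ : ℝ) (hp₀ : 0 < p₀) (hlow : ∀ n, ENNReal.ofReal p₀ ≤ μ (A n)) (k : ℕ) :
    ∀ᵐ ω ∂μ, ∃ n, k ≤ n ∧ ω ∈ A n := by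
  classical
  set q : ℕ → ℝ := fun i => (μ (A i)).toReal with hq_def
  have hq_nonneg : ∀ i, 0 ≤ q i := fun i => ENNReal.toReal_nonneg
  have hq_low : ∀ i, p₀ ≤ q i := by
    intro i
    have := ENNReal.toReal_mono (measure_ne_top μ (A i)) (hlow i)
    rwa [ENNReal.toReal_ofReal hp₀.le] at this
  set ind : ℕ → Ω → ℝ := fun i => (A i).indicator (fun _ => (1:ℝ)) with hind_def
  have h_ind_int : ∀ i, Integrable (ind i) μ :=
    fun i => (integrable_const (1:ℝ)).indicator (hA i)
  have h_int_ind : ∀ i, ∫ ω, ind i ω ∂μ = q i := by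
    intro i
    rw [hind_def]
    exact integral_indicator_one (μ := μ) (hA i)
  have hprod : ∀ i j, (fun ω => ind i ω * ind j ω)
      = (A i ∩ A j).indicator (fun _ => (1:ℝ)) := by
    intro i j
    ext ω
    rw [hind_def]
    simp only
    rw [← Set.inter_indicator_mul]
    simp
  have h_int_prod : ∀ i j, Integrable (fun ω => ind i ω * ind j ω) μ := by
    intro i j
    rw [hprod]
    exact (integrable_const (1:ℝ)).indicator ((hA i).inter (hA j))
  have hij : ∀ i j, i ≠ j → ∫ ω, ind i ω * ind j ω ∂μ = q i * q j := by
    intro i j hne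
    rw [hprod]
    have := integral_indicator_one (μ := μ) ((hA i).inter (hA j))
    rw [show ((A i ∩ A j).indicator (fun _ => (1:ℝ))) = (A i ∩ A j).indicator 1 from rfl, this,
      Measure.real, hind i j hne, ENNReal.toReal_mul]
  have hii : ∀ i, ∫ ω, ind i ω * ind i ω ∂μ = q i := by
    intro i
    rw [hprod]
    have := integral_indicator_one (μ := μ) ((hA i).inter (hA i))
    rw [show ((A i ∩ A i).indicator (fun _ => (1:ℝ))) = (A i ∩ A i).indicator 1 from rfl, this,
      Set.inter_self, Measure.real]
  -- finite stage bound
  have key : ∀ m : ℕ, 1 ≤ m →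
      μ (⋂ i ∈ Finset.Ico k (k+m), (A i)ᶜ) ≤ ENNReal.ofReal (1/(m*p₀)) := by
    intro m hm
    set F := Finset.Ico k (k+m) with hF_def
    have hFcard : F.card = m := by rw [hF_def, Nat.card_Ico]; omega
    set S : Ω → ℝ := fun ω => ∑ i ∈ F, ind i ω with hS_def
    set c : ℝ := ∑ i ∈ F, q i with hc_def
    have hSint : Integrable S μ := integrable_finset_sum _ (fun i _ => h_ind_int i)
    have hES : ∫ ω, S ω ∂μ = c := by
      rw [hS_def, integral_finset_sum _ (fun i _ => h_ind_int i)]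
      exact Finset.sum_congr rfl fun i _ => h_int_ind i
    have hc_low : (m:ℝ) * p₀ ≤ c := by
      calc (m:ℝ) * p₀ = F.card • p₀ := by rw [hFcard, nsmul_eq_mul]
        _ ≤ ∑ i ∈ F, q i := Finset.card_nsmul_le_sum F q p₀ (fun i _ => hq_low i)
    have hc_pos : 0 < c := lt_of_lt_of_le (by positivity : (0:ℝ) < p₀) (by
      calc p₀ = 1 * p₀ := (one_mul _).symm
        _ ≤ (m:ℝ) * p₀ := by
            apply mul_le_mul_of_nonneg_right _ hp₀.le
            exact_mod_cast hm
        _ ≤ c := hc_low)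
    have hSS : (fun ω => S ω * S ω) = fun ω => ∑ i ∈ F, ∑ j ∈ F, ind i ω * ind j ω := by
      ext ω
      rw [hS_def]
      simp only
      rw [Finset.sum_mul_sum]
    have hSSint : Integrable (fun ω => S ω * S ω) μ := by
      rw [hSS]
      exact integrable_finset_sum _ (fun i _ => integrable_finset_sum _ (fun j _ => h_int_prod i j))
    have hES2 : ∫ ω, S ω * S ω ∂μ ≤ c + c * c := by
      rw [hSS, integral_finset_sum _ (fun i _ => integrable_finset_sum _ (fun j _ => h_int_prod i j))]
      have hrow : ∀ i ∈ F, ∫ ω, ∑ j ∈ F, ind i ω * ind j ω ∂μ ≤ q i + q i * c := by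
        intro i hi
        rw [integral_finset_sum _ (fun j _ => h_int_prod i j)]
        have hsplit : ∑ j ∈ F, ∫ ω, ind i ω * ind j ω ∂μ
            = (∫ ω, ind i ω * ind i ω ∂μ) + ∑ j ∈ F.erase i, ∫ ω, ind i ω * ind j ω ∂μ :=
          (Finset.add_sum_erase F (fun j => ∫ ω, ind i ω * ind j ω ∂μ) hi).symm
        rw [hsplit, hii i]
        have : ∑ j ∈ F.erase i, ∫ ω, ind i ω * ind j ω ∂μ ≤ q i * c := by
          have heq : ∀ j ∈ F.erase i, ∫ ω, ind i ω * ind j ω ∂μ = q i * q j := by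
            intro j hj
            exact hij i j (Ne.symm (Finset.ne_of_mem_erase hj))
          rw [Finset.sum_congr rfl heq]
          calc ∑ j ∈ F.erase i, q i * q j ≤ ∑ j ∈ F, q i * q j := by
                apply Finset.sum_le_sum_of_subset_of_nonneg (Finset.erase_subset _ _)
                intro j _ _
                exact mul_nonneg (hq_nonneg i) (hq_nonneg j)
            _ = q i * c := by rw [hc_def, Finset.mul_sum]
        linarith
      calc ∑ i ∈ F, ∫ ω, ∑ j ∈ F, ind i ω * ind j ω ∂μ ≤ ∑ i ∈ F, (q i + q i * c) :=
            Finset.sum_le_sum hrow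
        _ = c + c * c := by rw [Finset.sum_add_distrib, ← Finset.sum_mul, ← hc_def]
    -- variance bound
    have hsq_eq : (fun ω => (S ω - c)^2) = fun ω => S ω * S ω - 2*c*S ω + c^2 := by
      ext ω; ring
    have hsqint : Integrable (fun ω => (S ω - c)^2) μ := by
      rw [hsq_eq]
      exact ((hSSint.sub (hSint.const_mul (2*c))).add (integrable_const _))
    have hsubint : Integrable (fun ω => S ω * S ω - 2*c*S ω) μ :=
      hSSint.sub (hSint.const_mul (2*c))
    have hmulint : Integrable (fun ω => 2*c*S ω) μ := hSint.const_mul (2*c)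
    have hvar : ∫ ω, (S ω - c)^2 ∂μ ≤ c := by
      rw [hsq_eq, integral_add hsubint (integrable_const _),
        integral_sub hSSint hmulint, integral_const_mul, hES, integral_const]
      simp only [probReal_univ, ENNReal.toReal_one, smul_eq_mul, one_mul]
      nlinarith [hES2]
    -- the lower bound on the event
    set T := ⋂ i ∈ F, (A i)ᶜ with hT_def
    have hTmeas : MeasurableSet T := by
      apply MeasurableSet.iInter
      intro i
      exact MeasurableSet.iInter fun _ => (hA i).compl
    have hzero : ∀ ω ∈ T, S ω = 0 := by
      intro ω hω
      rw [hS_def]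
      apply Finset.sum_eq_zero
      intro i hi
      have : ω ∉ A i := by
        have := Set.mem_iInter.mp hω i
        exact Set.mem_compl_iff _ _ |>.mp (Set.mem_iInter.mp this hi)
      exact Set.indicator_of_notMem this _
    have hTle : c^2 * (μ T).toReal ≤ ∫ ω, (S ω - c)^2 ∂μ := by
      have h1 : ∫ ω in T, (S ω - c)^2 ∂μ = ∫ _ω in T, c^2 ∂μ := by
        apply setIntegral_congr_fun hTmeas
        intro ω hω
        show (S ω - c)^2 = c^2
        rw [hzero ω hω]
        ring
      have h2 : ∫ _ω in T, c^2 ∂μ = (μ T).toReal * c^2 := by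
        rw [setIntegral_const, smul_eq_mul, Measure.real]
      have h3 : ∫ ω in T, (S ω - c)^2 ∂μ ≤ ∫ ω, (S ω - c)^2 ∂μ :=
        setIntegral_le_integral hsqint (ae_of_all _ fun ω => sq_nonneg _)
      rw [h1, h2] at h3
      linarith
    have htoReal : (μ T).toReal ≤ 1/(m*p₀) := by
      have h4 : c^2 * (μ T).toReal ≤ c := le_trans hTle hvar
      have h5 : (μ T).toReal ≤ 1/c := by
        rw [le_div_iff₀ hc_pos]
        nlinarith [ENNReal.toReal_nonneg (a := μ T)]
      calc (μ T).toReal ≤ 1/c := h5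
        _ ≤ 1/((m:ℝ)*p₀) := by
            apply one_div_le_one_div_of_le (by positivity) hc_low
    exact (ENNReal.le_ofReal_iff_toReal_le (measure_ne_top μ T) (by positivity)).mpr htoReal
  -- pass to the limit
  rw [ae_iff]
  have hsub : {ω | ¬ ∃ n, k ≤ n ∧ ω ∈ A n} ⊆ ⋂ i ∈ Finset.Ico k (k + 1), (A i)ᶜ := by
    intro ω hω
    simp only [Set.mem_setOf_eq, not_exists, not_and] at hω
    exact Set.mem_iInter.mpr fun i => Set.mem_iInter.mpr fun hi =>
      hω i (Finset.mem_Ico.mp hi).1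
  have hboundall : ∀ m : ℕ, μ {ω | ¬ ∃ n, k ≤ n ∧ ω ∈ A n}
      ≤ ENNReal.ofReal (1/((m+1)*p₀)) := by
    intro m
    have hk := key (m+1) (by omega)
    rw [Nat.cast_add, Nat.cast_one] at hk
    refine le_trans (measure_mono ?_) hk
    intro ω hω
    simp only [Set.mem_setOf_eq, not_exists, not_and] at hω
    exact Set.mem_iInter.mpr fun i => Set.mem_iInter.mpr fun hi =>
      hω i (Finset.mem_Ico.mp hi).1
  have htends : Tendsto (fun m : ℕ => ENNReal.ofReal (1/(((m:ℝ)+1)*p₀))) atTop (𝓝 0) := by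
    rw [show (0:ℝ≥0∞) = ENNReal.ofReal 0 by simp]
    apply ENNReal.tendsto_ofReal
    have h1 : Tendsto (fun m : ℕ => 1/((m:ℝ)+1)) atTop (𝓝 0) :=
      tendsto_one_div_add_atTop_nhds_zero_nat
    have := h1.mul_const (1/p₀)
    rw [zero_mul] at this
    convert this using 2 with m
    field_simp
  have : μ {ω | ¬ ∃ n, k ≤ n ∧ ω ∈ A n} ≤ 0 := by
    apply ge_of_tendsto' htends
    intro m
    exact_mod_cast hboundall m
  exact le_antisymm this zero_le

end AuxLemmas

section MainTheorem
open Set Real Filter Topology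
open scoped NNReal ENNReal

/-- Brownian motion started on a locally Lipschitz boundary immediately crosses
above it: a.s., for every `ε > 0` there is `0 < u < ε` with
`b(s) + B_u > b(s + u)`; i.e. `inf{u > 0 : Y_{s+u} > b(s+u)} = 0`. -/
theorem bm_immediately_crosses_lipschitz_boundary
    {Ω : Type*} [MeasurableSpace Ω] (μ : Measure Ω) [IsProbabilityMeasure μ]
    (B : ℝ → Ω → ℝ) (hB : IsStandardBM μ B)
    (b : ℝ → ℝ) (hb : LocallyLipschitz b) (s : ℝ) (hs : 0 ≤ s) :
    ∀ᵐ ω ∂μ, ∀ ε : ℝ, 0 < ε →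
      ∃ u : ℝ, 0 < u ∧ u < ε ∧ b s + B u ω > b (s + u) := by
  classical
  -- Lipschitz data near s
  obtain ⟨K, U, hU, hK⟩ := hb s
  obtain ⟨δ, hδ, hball⟩ := Metric.mem_nhds_iff.mp hU
  -- the time sequence
  set r : ℕ → ℝ := fun n => (2⁻¹:ℝ)^(n^2) with hr_def
  set t : ℕ → ℝ := fun n => (r n)^2 with ht_def
  have hr_pos : ∀ n, 0 < r n := fun n => pow_pos (by norm_num) _
  have hr_le_one : ∀ n, r n ≤ 1 := fun n => pow_le_one₀ (by norm_num) (by norm_num)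
  have hr_anti : ∀ i j : ℕ, i ≤ j → r j ≤ r i := by
    intro i j hij
    exact pow_le_pow_of_le_one (by norm_num) (by norm_num) (Nat.pow_le_pow_left hij 2)
  have hr_geom : ∀ n, r n ≤ (2⁻¹:ℝ)^n := by
    intro n
    exact pow_le_pow_of_le_one (by norm_num) (by norm_num) (Nat.le_self_pow (by norm_num) n)
  have ht_pos : ∀ n, 0 < t n := fun n => pow_pos (hr_pos n) _
  have ht_anti : ∀ i j : ℕ, i ≤ j → t j ≤ t i := by
    intro i j hij
    exact pow_le_pow_left₀ (hr_pos j).le (hr_anti i j hij) 2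
  have hr_succ : ∀ n, r (n+1) = r n * (2⁻¹:ℝ)^(2*n+1) := by
    intro n
    rw [hr_def]
    simp only
    rw [← pow_add]
    congr 1
    ring
  have hhalf : ∀ n : ℕ, ((2⁻¹:ℝ)^(2*n+1)) ≤ 2⁻¹ := fun n => by
    simpa using pow_le_pow_of_le_one (a := (2⁻¹:ℝ)) (by norm_num) (by norm_num)
      (show 1 ≤ 2*n+1 by omega)
  have ht_succ : ∀ n, t (n+1) ≤ t n / 2 := by
    intro n
    rw [ht_def]
    simp only
    rw [hr_succ n]
    have h1 := hhalf n
    have h2 : (0:ℝ) < (2⁻¹:ℝ)^(2*n+1) := pow_pos (by norm_num) _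
    have hq2 : ((2⁻¹:ℝ)^(2*n+1))^2 ≤ 1/4 := by nlinarith
    calc (r n * (2⁻¹:ℝ)^(2*n+1))^2 = (r n)^2 * ((2⁻¹:ℝ)^(2*n+1))^2 := by ring
      _ ≤ (r n)^2 * (1/4) := mul_le_mul_of_nonneg_left hq2 (sq_nonneg _)
      _ ≤ (r n)^2/2 := by nlinarith [sq_nonneg (r n)]
  have hsqrt_t : ∀ n, Real.sqrt (t n) = r n := fun n => Real.sqrt_sq (hr_pos n).le
  -- the increments and events
  set D : ℕ → Ω → ℝ := fun n ω => B (t n) ω - B (t (n+1)) ω with hD_def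
  have hD_meas : ∀ n, Measurable (D n) := fun n => (hB.meas _).sub (hB.meas _)
  set A : ℕ → Set Ω := fun n => D n ⁻¹' Set.Ioi (r n) with hA_def
  have hA_meas : ∀ n, MeasurableSet (A n) := fun n => hD_meas n measurableSet_Ioi
  set G : ℕ → Ω → ℝ := fun n ω => B (t (n+1)) ω - B 0 ω with hG_def
  have hG_meas : ∀ n, Measurable (G n) := fun n => (hB.meas _).sub (hB.meas _)
  set C : ℕ → Set Ω := fun n => G n ⁻¹' Set.Iic (-(r n / 2)) with hC_def
  -- laws
  have hDlaw : ∀ n, μ.map (D n) = gaussianReal 0 (Real.toNNReal (t n - t (n+1))) :=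
    fun n => hB.incr_law (t (n+1)) (t n) (ht_pos _).le (ht_anti n (n+1) (by omega))
  have hGlaw : ∀ n, μ.map (G n) = gaussianReal 0 (Real.toNNReal (t (n+1) - 0)) :=
    fun n => hB.incr_law 0 (t (n+1)) le_rfl (ht_pos _).le
  -- lower bound for A n
  set p₀ : ℝ := Real.exp (-3) / Real.sqrt (2*Real.pi) with hp₀_def
  have hp₀ : 0 < p₀ := by
    rw [hp₀_def]
    have : (0:ℝ) < Real.sqrt (2*Real.pi) := Real.sqrt_pos.mpr (by positivity)
    positivity
  have hAlow : ∀ n, ENNReal.ofReal p₀ ≤ μ (A n) := by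
    intro n
    have hmap : μ (A n) = (μ.map (D n)) (Set.Ioi (r n)) :=
      (Measure.map_apply (hD_meas n) measurableSet_Ioi).symm
    rw [hmap, hDlaw n]
    have hvpos : 0 < ((Real.toNNReal (t n - t (n+1))) : ℝ) := by
      rw [Real.coe_toNNReal _ (by linarith [ht_succ n, ht_pos n])]
      linarith [ht_succ n, ht_pos n]
    apply gauss_Ioi_lower hvpos (hr_pos n).le
    rw [Real.coe_toNNReal _ (by linarith [ht_succ n, ht_pos n])]
    have := ht_succ n
    have : (r n)^2 = t n := rfl
    linarith [ht_succ n]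
  -- pairwise independence
  have hpair : ∀ i j, i ≠ j → μ (A i ∩ A j) = μ (A i) * μ (A j) := by
    have hlt : ∀ i j, i < j → μ (A i ∩ A j) = μ (A i) * μ (A j) := by
      intro i j hij
      have hindep : IndepFun (D j) (D i) μ :=
        hB.indep_incr (t (j+1)) (t j) (t (i+1)) (t i) (ht_pos _).le
          (ht_anti j (j+1) (by omega)) (ht_anti (i+1) j (by omega))
          (ht_anti i (i+1) (by omega))
      have := hindep.symm.measure_inter_preimage_eq_mul
        (s := Set.Ioi (r i)) (t := Set.Ioi (r j)) measurableSet_Ioi measurableSet_Ioi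
      exact this
    intro i j hij
    rcases Nat.lt_or_ge i j with h | h
    · exact hlt i j h
    · have hj : j < i := by omega
      rw [Set.inter_comm, mul_comm]
      exact hlt j i hj
  -- first Borel-Cantelli for C n
  have hCbound : ∀ n, μ (C n) ≤ ENNReal.ofReal ((2⁻¹:ℝ)^n) := by
    intro n
    have hmap : μ (C n) = (μ.map (G n)) (Set.Iic (-(r n / 2))) :=
      (Measure.map_apply (hG_meas n) measurableSet_Iic).symm
    rw [hmap, hGlaw n, gauss_Iic_neg]
    have hw : ((Real.toNNReal (t (n+1) - 0)) : ℝ) = t (n+1) := by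
      rw [sub_zero, Real.coe_toNNReal _ (ht_pos _).le]
    have h1 : gaussianReal 0 (Real.toNNReal (t (n+1) - 0)) (Set.Ici (r n / 2))
        ≤ ENNReal.ofReal (Real.sqrt (Real.toNNReal (t (n+1) - 0)) / (r n / 2)) :=
      gauss_Ici_upper (by rw [hw]; exact ht_pos _) (by positivity)
    refine le_trans h1 (ENNReal.ofReal_le_ofReal ?_)
    rw [hw, sub_zero] at *
    rw [show Real.sqrt (t (n+1)) = r (n+1) from hsqrt_t (n+1), hr_succ n]
    rw [div_le_iff₀ (by positivity)]
    calc r n * (2⁻¹:ℝ)^(2*n+1) = (r n / 2) * (2⁻¹:ℝ)^(2*n) := by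
          rw [pow_succ]
          ring
      _ ≤ (2⁻¹:ℝ)^n * (r n / 2) := by
          rw [mul_comm]
          apply mul_le_mul_of_nonneg_right _ (by positivity)
          exact pow_le_pow_of_le_one (by norm_num) (by norm_num) (by omega)
  have hCsum : (∑' n, μ (C n)) ≠ ⊤ := by
    have hle : (∑' n, μ (C n)) ≤ ∑' n : ℕ, (ENNReal.ofReal (2⁻¹:ℝ))^n := by
      apply ENNReal.tsum_le_tsum
      intro n
      refine le_trans (hCbound n) (le_of_eq ?_)
      rw [← ENNReal.ofReal_pow (by norm_num)]
    apply ne_top_of_le_ne_top _ hle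
    rw [ENNReal.tsum_geometric]
    apply ENNReal.inv_ne_top.mpr
    have h1 : ENNReal.ofReal (2⁻¹:ℝ) < 1 := by
      rw [ENNReal.ofReal_lt_one]
      norm_num
    exact (tsub_pos_of_lt h1).ne'
  have hBC1 : ∀ᵐ ω ∂μ, ∀ᶠ n in atTop, ω ∉ C n := ae_eventually_notMem hCsum
  have hBC2 : ∀ᵐ ω ∂μ, ∀ k : ℕ, ∃ n, k ≤ n ∧ ω ∈ A n :=
    ae_all_iff.mpr (fun k => pairwise_bc μ A hA_meas hpair p₀ hp₀ hAlow k)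
  -- limit of r
  have hrlim : Tendsto r atTop (𝓝 0) := by
    apply squeeze_zero (fun n => (hr_pos n).le) hr_geom
    exact tendsto_pow_atTop_nhds_zero_of_lt_one (by norm_num) (by norm_num)
  -- combine
  filter_upwards [hB.init, hBC1, hBC2] with ω h0 hC_ev hA_io
  intro ε hε
  obtain ⟨m, hm, hmε, hmδ, hmK⟩ : ∃ m : ℝ, 0 < m ∧ m ≤ ε ∧ m ≤ δ ∧
      m ≤ 1/(2*((K:ℝ)+1)) := by
    refine ⟨min (min ε δ) (1/(2*((K:ℝ)+1))), ?_, ?_, ?_, ?_⟩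
    · apply lt_min (lt_min hε hδ)
      positivity
    · exact le_trans (min_le_left _ _) (min_le_left _ _)
    · exact le_trans (min_le_left _ _) (min_le_right _ _)
    · exact min_le_right _ _
  obtain ⟨N₁, hN₁⟩ := eventually_atTop.mp hC_ev
  obtain ⟨n₀, hn₀⟩ := ((hrlim.eventually_lt_const hm).and (eventually_ge_atTop N₁)).exists
  obtain ⟨n, hn, hωA⟩ := hA_io n₀
  have hrn : r n < m := lt_of_le_of_lt (hr_anti n₀ n hn) hn₀.1
  have hN₁n : N₁ ≤ n := le_trans hn₀.2 hn
  have hωC : ω ∉ C n := hN₁ n hN₁n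
  refine ⟨t n, ht_pos n, ?_, ?_⟩
  · have : t n ≤ r n := by
      rw [ht_def]
      simp only
      nlinarith [hr_pos n, hr_le_one n]
    calc t n ≤ r n := this
      _ < m := hrn
      _ ≤ ε := hmε
  · -- the crossing
    have hDn : r n < D n ω := Set.mem_Ioi.mp (Set.mem_preimage.mp hωA)
    have hGn : -(r n / 2) < G n ω := by
      by_contra h
      push_neg at h
      exact hωC (Set.mem_preimage.mpr (Set.mem_Iic.mpr h))
    have hBu : B (t n) ω = D n ω + G n ω + B 0 ω := by
      rw [hD_def, hG_def]
      ring
    have hsum2 : r n + -(r n / 2) < D n ω + G n ω := add_lt_add hDn hGn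
    have hBlow : r n / 2 < B (t n) ω := by
      rw [hBu, h0]
      linarith [hsum2]
    -- Lipschitz bound
    have htδ : t n < δ := by
      have h1 : t n ≤ r n := by
        rw [ht_def]; simp only; nlinarith [hr_pos n, hr_le_one n]
      calc t n ≤ r n := h1
        _ < m := hrn
        _ ≤ δ := hmδ
    have hmem1 : s ∈ U := hball (Metric.mem_ball_self hδ)
    have hmem2 : s + t n ∈ U := by
      apply hball
      rw [Metric.mem_ball, Real.dist_eq]
      rw [show s + t n - s = t n by ring, abs_of_pos (ht_pos n)]
      exact htδ
    have hlip : b (s + t n) - b s ≤ (K:ℝ) * t n := by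
      have := hK.dist_le_mul _ hmem2 _ hmem1
      rw [Real.dist_eq, Real.dist_eq, show s + t n - s = t n by ring,
        abs_of_pos (ht_pos n)] at this
      calc b (s + t n) - b s ≤ |b (s + t n) - b s| := le_abs_self _
        _ ≤ (K:ℝ) * t n := this
    have hsmall : ((K:ℝ)+1) * t n < r n / 2 := by
      have h1 : r n < 1/(2*((K:ℝ)+1)) := lt_of_lt_of_le hrn hmK
      have h2 : t n = r n * r n := sq (r n)
      rw [h2]
      have hKpos : (0:ℝ) < (K:ℝ)+1 := by positivity
      calc ((K:ℝ)+1) * (r n * r n) < ((K:ℝ)+1) * ((1/(2*((K:ℝ)+1))) * r n) := by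
            apply mul_lt_mul_of_pos_left _ hKpos
            exact mul_lt_mul_of_pos_right h1 (hr_pos n)
        _ = r n / 2 := by field_simp
    have hKK : (K:ℝ) * t n ≤ ((K:ℝ)+1) * t n := by
      nlinarith [ht_pos n]
    show b s + B (t n) ω > b (s + t n)
    linarith

end MainTheorem
end

section
/- Let β_T, γ_T satisfy β_T(t) > 0 on [0,T), γ_T strictly increasing with γ_T(0) = 0, γ_T(t) → ∞ and β_T(t)·γ_T(t) → 1 as t → T, and let B be a standard Brownian motion. Then the process X_t = α(t) + β_T(t)·((z − α(T))·γ_T(t) + B_{γ_T(t)} + (x − α(0))/β_T(0)) for t ∈ [0,T), where α is continuous on [0,T], converges almost surely to z as t → T. -/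
set_option maxHeartbeats 1000000

open MeasureTheory ProbabilityTheory Filter Set Real
open scoped ENNReal NNReal

lemma gauss_tail (v : NNReal) (hv : v ≠ 0) (a : ℝ) (ha : 0 ≤ a) :
    gaussianReal 0 v {x : ℝ | a ≤ |x|} ≤ ENNReal.ofReal (Real.sqrt 2 * Real.exp (-a^2 / (4*v))) := by
  have hvpos : (0:ℝ) < v := by positivity
  rw [gaussianReal_apply_eq_integral 0 hv]
  apply ENNReal.ofReal_le_ofReal
  set c : ℝ := (Real.sqrt (2 * Real.pi * v))⁻¹ with hc
  have hcpos : 0 < c := by positivity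
  have hg : Integrable (fun x : ℝ => c * (Real.exp (-a^2/(4*v)) * Real.exp (-(4*(v:ℝ))⁻¹ * x^2))) := by
    exact ((integrable_exp_neg_mul_sq (by positivity : (0:ℝ) < (4*(v:ℝ))⁻¹)).const_mul _).const_mul _
  have hmeas : MeasurableSet {x : ℝ | a ≤ |x|} :=
    measurableSet_le measurable_const measurable_abs
  calc ∫ x in {x : ℝ | a ≤ |x|}, gaussianPDFReal 0 v x
      ≤ ∫ x in {x : ℝ | a ≤ |x|}, c * (Real.exp (-a^2/(4*v)) * Real.exp (-(4*(v:ℝ))⁻¹ * x^2)) := by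
        apply setIntegral_mono_on (integrable_gaussianPDFReal 0 v).integrableOn hg.integrableOn hmeas
        intro x hx
        simp only [mem_setOf_eq] at hx
        unfold gaussianPDFReal
        rw [← hc]
        apply mul_le_mul_of_nonneg_left _ hcpos.le
        rw [← Real.exp_add]
        apply Real.exp_le_exp.2
        have hx2 : a^2 ≤ x^2 := by
          have := sq_abs x
          nlinarith [abs_nonneg x]
        rw [sub_zero, div_add' _ _ _ (by positivity : (4*(v:ℝ)) ≠ 0)]
        rw [div_le_div_iff₀ (by positivity) (by positivity)]
        have h4 : -(4*(v:ℝ))⁻¹ * x^2 * (4*(v:ℝ)) = -x^2 := by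
          field_simp
        nlinarith [hvpos, hx2, sq_nonneg x]
    _ ≤ ∫ x : ℝ, c * (Real.exp (-a^2/(4*v)) * Real.exp (-(4*(v:ℝ))⁻¹ * x^2)) := by
        apply setIntegral_le_integral hg
        filter_upwards with x using by positivity
    _ = Real.sqrt 2 * Real.exp (-a^2 / (4*v)) := by
        rw [integral_const_mul, integral_const_mul, integral_gaussian]
        rw [show Real.pi / (4*(v:ℝ))⁻¹ = 2 * (2 * Real.pi * (v:ℝ)) by field_simp; ring]
        rw [Real.sqrt_mul (by norm_num : (0:ℝ) ≤ 2)]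
        have h0 : Real.sqrt (2 * Real.pi * (v:ℝ)) ≠ 0 := by positivity
        field_simp [hc]
        ring_nf
        rw [hc, show (v:ℝ)*π*2 = 2*π*v by ring]
        exact inv_mul_cancel₀ h0

lemma incr_tail {Ω : Type*} [MeasurableSpace Ω] {μ : Measure Ω} {B : ℝ → Ω → ℝ}
    (hB : IsStandardBM μ B) {s t : ℝ} (hs : 0 ≤ s) (hst : s < t) {a : ℝ} (ha : 0 ≤ a) :
    μ {ω | a ≤ |B t ω - B s ω|} ≤ ENNReal.ofReal (Real.sqrt 2 * Real.exp (-a^2 / (4*(t-s)))) := by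
  have hmeas : MeasurableSet {x : ℝ | a ≤ |x|} :=
    measurableSet_le measurable_const measurable_abs
  have hf : Measurable (fun ω => B t ω - B s ω) := (hB.meas t).sub (hB.meas s)
  have : μ {ω | a ≤ |B t ω - B s ω|} = (μ.map (fun ω => B t ω - B s ω)) {x : ℝ | a ≤ |x|} := by
    rw [Measure.map_apply hf hmeas]; rfl
  rw [this, hB.incr_law s t hs hst.le]
  have hv : (t - s).toNNReal ≠ 0 := by
    simp only [ne_eq, Real.toNNReal_eq_zero, not_le]; linarith
  have := gauss_tail (t-s).toNNReal hv a ha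
  rwa [Real.coe_toNNReal _ (by linarith : (0:ℝ) ≤ t - s)] at this

/-- Dyadic chaining: if all dyadic increments at level `k` are ≤ `a k`,
then dyadic points of level `m` are within `∑_{k≤m} a k` of `f u`. -/
lemma dyadic_chain (f : ℝ → ℝ) (u : ℝ) (a : ℕ → ℝ) (ha : ∀ k, 0 ≤ a k)
    (h : ∀ k : ℕ, ∀ j : ℕ, j < 2^k → |f (u + ((j:ℝ)+1) * (2:ℝ)⁻¹^k) - f (u + j * (2:ℝ)⁻¹^k)| ≤ a k) :
    ∀ m : ℕ, ∀ j : ℕ, j ≤ 2^m → |f (u + (j:ℝ) * (2:ℝ)⁻¹^m) - f u| ≤ ∑ k ∈ Finset.range (m+1), a k := by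
  intro m
  induction m with
  | zero =>
    intro j hj
    interval_cases j
    · simpa using ha 0
    · have := h 0 0 (by norm_num)
      simpa using this
  | succ m ih =>
    intro j hj
    rcases Nat.even_or_odd j with ⟨i, hi⟩ | ⟨i, hi⟩
    · subst hi
      have hi2 : i ≤ 2^m := by omega
      have heq : ((i+i : ℕ) : ℝ) * (2:ℝ)⁻¹^(m+1) = (i : ℝ) * (2:ℝ)⁻¹^m := by
        push_cast; ring
      rw [heq]
      calc |f (u + i * (2:ℝ)⁻¹^m) - f u| ≤ ∑ k ∈ Finset.range (m+1), a k := ih i hi2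
        _ ≤ ∑ k ∈ Finset.range (m+2), a k := by
            apply Finset.sum_le_sum_of_subset_of_nonneg
            · exact Finset.range_subset_range.2 (by omega)
            · intro k _ _; exact ha k
    · subst hi
      have h2i : 2*i < 2^(m+1) := by omega
      have hi2 : i ≤ 2^m := by omega
      have hstep := h (m+1) (2*i) h2i
      have heq1 : ((2*i+1 : ℕ) : ℝ) * (2:ℝ)⁻¹^(m+1) = ((2*i : ℕ)+1 : ℝ) * (2:ℝ)⁻¹^(m+1) := by
        push_cast; ring
      have heq2 : ((2*i : ℕ) : ℝ) * (2:ℝ)⁻¹^(m+1) = (i : ℝ) * (2:ℝ)⁻¹^m := by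
        push_cast; ring
      calc |f (u + (2*i+1 : ℕ) * (2:ℝ)⁻¹^(m+1)) - f u|
          ≤ |f (u + (2*i+1 : ℕ) * (2:ℝ)⁻¹^(m+1)) - f (u + (2*i : ℕ) * (2:ℝ)⁻¹^(m+1))|
            + |f (u + (2*i : ℕ) * (2:ℝ)⁻¹^(m+1)) - f u| := by
            apply abs_sub_le
        _ ≤ a (m+1) + ∑ k ∈ Finset.range (m+1), a k := by
            apply add_le_add
            · rw [heq1]; exact hstep
            · rw [heq2]; exact ih i hi2
        _ = ∑ k ∈ Finset.range (m+2), a k := by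
            rw [show m+2 = (m+1)+1 from rfl]
            rw [Finset.sum_range_succ a (m+1)]
            ring

/-- From dyadic bounds + continuity to the whole interval. -/
lemma interval_bound (f : ℝ → ℝ) (u C : ℝ) (hf : Continuous f)
    (h : ∀ m : ℕ, ∀ j : ℕ, j ≤ 2^m → |f (u + (j:ℝ) * (2:ℝ)⁻¹^m) - f u| ≤ C) :
    ∀ t ∈ Icc u (u+1), |f t - f u| ≤ C := by
  intro t ht
  obtain ⟨ht1, ht2⟩ := ht
  have hd : 0 ≤ t - u := by linarith
  have hd1 : t - u ≤ 1 := by linarith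
  set x : ℕ → ℝ := fun m => u + (⌊(t-u) * 2^m⌋₊ : ℝ) * (2:ℝ)⁻¹^m with hx
  have hxt : Tendsto x atTop (nhds t) := by
    have hb : ∀ m : ℕ, |x m - t| ≤ (2:ℝ)⁻¹^m := by
      intro m
      have h2m : (0:ℝ) < 2^m := by positivity
      have hfl : ((⌊(t-u) * 2^m⌋₊ : ℝ)) ≤ (t-u) * 2^m := Nat.floor_le (by positivity)
      have hfl2 : (t-u) * 2^m - 1 < (⌊(t-u) * 2^m⌋₊ : ℝ) := by
        have := Nat.lt_floor_add_one ((t-u) * 2^m)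
        linarith
      rw [abs_le]
      set y : ℝ := ((2:ℝ)^m)⁻¹ with hy
      have hyp : (0:ℝ) < y := by positivity
      have h3 : (t-u)*2^m*y = t-u := by rw [hy]; field_simp
      have h1 : (⌊(t-u) * 2^m⌋₊ : ℝ) * y ≤ (t-u)*2^m*y :=
        mul_le_mul_of_nonneg_right hfl hyp.le
      have h2 : ((t-u)*2^m - 1)*y ≤ (⌊(t-u) * 2^m⌋₊ : ℝ) * y :=
        mul_le_mul_of_nonneg_right hfl2.le hyp.le
      rw [sub_mul, one_mul, h3] at h2
      rw [h3] at h1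
      have hxm : x m = u + (⌊(t-u) * 2^m⌋₊ : ℝ) * y := by
        show u + (⌊(t-u) * 2^m⌋₊ : ℝ) * (2:ℝ)⁻¹^m = _
        rw [inv_pow]
      have hyy : (2:ℝ)⁻¹^m = y := by rw [hy, inv_pow]
      rw [hxm, hyy]
      constructor <;> linarith
    have : Tendsto (fun m : ℕ => (2:ℝ)⁻¹^m) atTop (nhds 0) :=
      tendsto_pow_atTop_nhds_zero_of_lt_one (by norm_num) (by norm_num)
    rw [tendsto_iff_dist_tendsto_zero]
    apply squeeze_zero (fun m => dist_nonneg) (fun m => by rw [Real.dist_eq]; exact hb m) this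
  have hfx : Tendsto (fun m => |f (x m) - f u|) atTop (nhds (|f t - f u|)) := by
    exact ((hf.tendsto t).comp hxt |>.sub tendsto_const_nhds).abs
  apply le_of_tendsto hfx
  filter_upwards with m
  apply h m
  have : (t-u) * 2^m ≤ 2^m := by nlinarith [(by positivity : (0:ℝ) < (2:ℝ)^m)]
  have : ⌊(t-u) * 2^m⌋₊ ≤ 2^m := by
    calc ⌊(t-u) * 2^m⌋₊ ≤ ⌊((2:ℝ)^m)⌋₊ := Nat.floor_le_floor this
      _ = 2^m := by
          rw [show ((2:ℝ)^m) = ((2^m : ℕ) : ℝ) by push_cast; ring, Nat.floor_natCast]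
  exact_mod_cast this

lemma det_bound (f : ℝ → ℝ) (hf : Continuous f) (h0 : f 0 = 0) (ε : ℝ) (hε : 0 < ε) (N : ℕ)
    (h : ∀ m : ℕ, N ≤ m →
      (|f ((m:ℝ)+1) - f 0| ≤ ε/2*((m:ℝ)+1)) ∧
      (∀ k j : ℕ, j < 2^k →
        |f (((m:ℝ)+1) + ((j:ℝ)+1)*(2:ℝ)⁻¹^k) - f (((m:ℝ)+1) + (j:ℝ)*(2:ℝ)⁻¹^k)|
          ≤ ε * (3/4)^k/8 * ((m:ℝ)+1))) :
    ∀ s : ℝ, (N:ℝ) + 2 ≤ s → |f s| ≤ ε * s := by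
  intro s hs
  have hs0 : (0:ℝ) < s := by
    have : (0:ℝ) ≤ N := Nat.cast_nonneg N
    linarith
  set n : ℕ := ⌊s⌋₊ with hn
  have hnN : N + 2 ≤ n := by
    rw [hn]
    apply Nat.le_floor
    push_cast
    linarith
  have hn1 : 1 ≤ n := by omega
  set m : ℕ := n - 1 with hm
  have hnm : n = m + 1 := by omega
  have hmN : N ≤ m := by omega
  have hu : ((n:ℝ)) = (m:ℝ) + 1 := by rw [hnm]; push_cast; ring
  obtain ⟨hA, hE⟩ := h m hmN
  -- chaining bound on [n, n+1]
  have hchain := dyadic_chain f ((m:ℝ)+1) (fun k => ε * (3/4)^k/8 * ((m:ℝ)+1))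
    (fun k => by positivity) (hE)
  have hsum : ∀ M : ℕ, ∑ k ∈ Finset.range M, ε * (3/4)^k/8 * ((m:ℝ)+1) ≤ ε/2*((m:ℝ)+1) := by
    intro M
    have hgeom : ∑ k ∈ Finset.range M, ((3:ℝ)/4)^k ≤ 4 := by
      have h1 : ∑ k ∈ Finset.range M, ((3:ℝ)/4)^k = (1 - (3/4:ℝ)^M) / (1 - 3/4) := by
        rw [geom_sum_eq (by norm_num)]
        rw [show ((3:ℝ)/4 - 1) = -(1 - 3/4) by ring, show ((3:ℝ)/4)^M - 1 = -(1 - (3/4:ℝ)^M) by ring]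
        rw [neg_div_neg_eq]
      rw [h1]
      have : (0:ℝ) ≤ (3/4:ℝ)^M := by positivity
      rw [div_le_iff₀ (by norm_num : (0:ℝ) < 1 - 3/4)]
      linarith
    have heq : ∑ k ∈ Finset.range M, ε * (3/4)^k/8 * ((m:ℝ)+1)
        = (ε/8*((m:ℝ)+1)) * ∑ k ∈ Finset.range M, ((3:ℝ)/4)^k := by
      rw [Finset.mul_sum]
      apply Finset.sum_congr rfl
      intros; ring
    rw [heq]
    calc (ε/8*((m:ℝ)+1)) * ∑ k ∈ Finset.range M, ((3:ℝ)/4)^k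
        ≤ (ε/8*((m:ℝ)+1)) * 4 := by
          apply mul_le_mul_of_nonneg_left hgeom (by positivity)
      _ = ε/2*((m:ℝ)+1) := by ring
  have hinterval := interval_bound f ((m:ℝ)+1) (ε/2*((m:ℝ)+1)) hf
    (fun M j hj => le_trans (hchain M j hj) (hsum (M+1)))
  have hsmem : s ∈ Icc ((m:ℝ)+1) (((m:ℝ)+1)+1) := by
    constructor
    · rw [← hu]; exact Nat.floor_le hs0.le
    · rw [← hu]
      have := Nat.lt_floor_add_one s
      rw [← hn] at this
      linarith
  have h1 := hinterval s hsmem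
  have h2 : |f ((m:ℝ)+1)| ≤ ε/2*((m:ℝ)+1) := by
    rw [h0, sub_zero] at hA; exact hA
  have h3 : |f s| ≤ ε * ((m:ℝ)+1) :=
    calc |f s| ≤ |f s - f ((m:ℝ)+1)| + |f ((m:ℝ)+1)| := by
          have := abs_sub_abs_le_abs_sub (f s) (f ((m:ℝ)+1))
          have := abs_add_le (f s - f ((m:ℝ)+1)) (f ((m:ℝ)+1))
          calc |f s| = |(f s - f ((m:ℝ)+1)) + f ((m:ℝ)+1)| := by ring_nf
            _ ≤ _ := abs_add_le _ _
      _ ≤ ε/2*((m:ℝ)+1) + ε/2*((m:ℝ)+1) := add_le_add h1 h2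
      _ = ε * ((m:ℝ)+1) := by ring
  calc |f s| ≤ ε * ((m:ℝ)+1) := h3
    _ ≤ ε * s := by
        apply mul_le_mul_of_nonneg_left _ hε.le
        rw [← hu]
        exact Nat.floor_le hs0.le

section
variable {Ω : Type*} [MeasurableSpace Ω] {μ : Measure Ω} {B : ℝ → Ω → ℝ}

/-- Summability of the chaining bound over pairs. -/
lemma sum_chain (a : ℝ) (ha : 0 < a) :
    Summable (fun p : ℕ × ℕ =>
      (2:ℝ)^p.2 * (Real.sqrt 2 * Real.exp (-(a * (((p.1:ℝ)+1)^2 * (9/8)^p.2))))) := by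
  have hc : (1:ℝ) ≤ 9/8 := by norm_num
  set f : ℕ → ℝ := fun n => Real.exp a * Real.exp (-(a * ((n:ℝ)+1))) with hf
  set g : ℕ → ℝ := fun k => Real.sqrt 2 * ((2:ℝ)^k * Real.exp (-(a * (9/8:ℝ)^k))) with hg
  have hsf : Summable f := by
    apply Summable.mul_left
    have : ∀ n : ℕ, Real.exp (-(a * ((n:ℝ)+1))) = (Real.exp (-a))^(n+1) := by
      intro n
      rw [← Real.exp_nat_mul]
      congr 1
      push_cast; ring
    apply Summable.congr _ (fun n => (this n).symm)
    apply Summable.comp_injective (summable_geometric_of_lt_one (Real.exp_pos _).le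
      (Real.exp_lt_one_iff.2 (by linarith))) (add_left_injective 1)
  have hsg : Summable g := by
    apply Summable.mul_left
    have hb : ∀ k : ℕ, (2:ℝ)^k * Real.exp (-(a * (9/8:ℝ)^k))
        ≤ ((Nat.factorial 12 : ℝ)/a^12) * ((2:ℝ)/(9/8:ℝ)^12)^k := by
      intro k
      have h1 : (a * (9/8:ℝ)^k)^12 / (Nat.factorial 12) ≤ Real.exp (a * (9/8:ℝ)^k) :=
        Real.pow_div_factorial_le_exp _ (by positivity) 12
      have hx : (0:ℝ) < (a * (9/8:ℝ)^k)^12 := by positivity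
      have h2 : Real.exp (-(a * (9/8:ℝ)^k)) ≤ (Nat.factorial 12 : ℝ) / (a * (9/8:ℝ)^k)^12 := by
        rw [Real.exp_neg, ← inv_div ((a * (9/8:ℝ)^k)^12) ((Nat.factorial 12 : ℝ))]
        exact inv_anti₀ (by positivity) h1
      calc (2:ℝ)^k * Real.exp (-(a * (9/8:ℝ)^k))
          ≤ (2:ℝ)^k * ((Nat.factorial 12 : ℝ) / (a * (9/8:ℝ)^k)^12) :=
            mul_le_mul_of_nonneg_left h2 (by positivity)
        _ = ((Nat.factorial 12 : ℝ)/a^12) * ((2:ℝ)/(9/8:ℝ)^12)^k := by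
            rw [mul_pow a, ← pow_mul, div_pow (2:ℝ), ← pow_mul, Nat.mul_comm 12 k]
            field_simp
    have hgeo : Summable (fun k : ℕ => ((Nat.factorial 12 : ℝ)/a^12) * ((2:ℝ)/(9/8:ℝ)^12)^k) := by
      apply Summable.mul_left
      apply summable_geometric_of_lt_one (by positivity)
      rw [div_lt_one (by positivity)]
      norm_num
    exact Summable.of_nonneg_of_le (fun k => by positivity) hb hgeo
  have hfg : Summable (fun p : ℕ × ℕ => f p.1 * g p.2) :=
    hsf.mul_of_nonneg hsg (fun n => by rw [hf]; positivity) (fun k => by rw [hg]; positivity)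
  apply Summable.of_nonneg_of_le (fun p => by positivity) _ hfg
  intro ⟨n, k⟩
  simp only [hf, hg]
  have hck : (1:ℝ) ≤ (9/8:ℝ)^k := one_le_pow₀ hc
  have hn1 : (1:ℝ) ≤ (n:ℝ)+1 := by
    have : (0:ℝ) ≤ n := Nat.cast_nonneg n
    linarith
  have key : ((n:ℝ)+1) + (9/8:ℝ)^k - 1 ≤ ((n:ℝ)+1)^2 * (9/8:ℝ)^k := by
    nlinarith [mul_nonneg (sub_nonneg.2 hn1) (sub_nonneg.2 hck),
      mul_nonneg (mul_nonneg (by linarith : (0:ℝ) ≤ (n:ℝ)+1) (by linarith : (0:ℝ) ≤ (9/8:ℝ)^k)) (sub_nonneg.2 hn1)]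
  have hexp : Real.exp (-(a * (((n:ℝ)+1)^2 * (9/8)^k)))
      ≤ Real.exp a * (Real.exp (-(a * ((n:ℝ)+1))) * Real.exp (-(a * (9/8:ℝ)^k))) := by
    rw [← Real.exp_add, ← Real.exp_add]
    apply Real.exp_le_exp.2
    nlinarith [mul_le_mul_of_nonneg_left key ha.le]
  calc (2:ℝ)^k * (Real.sqrt 2 * Real.exp (-(a * (((n:ℝ)+1)^2 * (9/8)^k))))
      ≤ (2:ℝ)^k * (Real.sqrt 2 * (Real.exp a * (Real.exp (-(a * ((n:ℝ)+1))) * Real.exp (-(a * (9/8:ℝ)^k))))) := by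
        apply mul_le_mul_of_nonneg_left _ (by positivity)
        apply mul_le_mul_of_nonneg_left hexp (by positivity)
    _ = Real.exp a * Real.exp (-(a * ((n:ℝ)+1))) * (Real.sqrt 2 * ((2:ℝ)^k * Real.exp (-(a * (9/8:ℝ)^k)))) := by
        ring
end

lemma bc_events {Ω : Type*} [MeasurableSpace Ω] {μ : Measure Ω} {B : ℝ → Ω → ℝ}
    [IsProbabilityMeasure μ] (hB : IsStandardBM μ B) (ε : ℝ) (hε : 0 < ε) :
    ∀ᵐ ω ∂μ, ∃ N : ℕ, ∀ m : ℕ, N ≤ m →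
      (|B ((m:ℝ)+1) ω - B 0 ω| ≤ ε/2 * ((m:ℝ)+1)) ∧
      (∀ k j : ℕ, j < 2^k →
        |B (((m:ℝ)+1) + ((j:ℝ)+1)*(2:ℝ)⁻¹^k) ω - B (((m:ℝ)+1) + (j:ℝ)*(2:ℝ)⁻¹^k) ω|
          ≤ ε * (3/4)^k/8 * ((m:ℝ)+1)) := by
  -- the events
  set A : ℕ → Set Ω := fun m => {ω | ε/2 * ((m:ℝ)+1) ≤ |B ((m:ℝ)+1) ω - B 0 ω|} with hA
  set E : ℕ × ℕ → Set Ω := fun p => ⋃ j ∈ Finset.range (2^p.2),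
      {ω | ε * (3/4)^p.2/8 * ((p.1:ℝ)+1) ≤
        |B (((p.1:ℝ)+1) + ((j:ℝ)+1)*(2:ℝ)⁻¹^p.2) ω - B (((p.1:ℝ)+1) + (j:ℝ)*(2:ℝ)⁻¹^p.2) ω|} with hE
  -- measure bounds
  have hmA : ∀ m : ℕ, μ (A m) ≤ ENNReal.ofReal (Real.sqrt 2 * Real.exp (-(ε^2/16) * ((m:ℝ)+1))) := by
    intro m
    have h1 : (0:ℝ) ≤ (m:ℝ) := Nat.cast_nonneg m
    have := incr_tail hB (s := 0) (t := (m:ℝ)+1) le_rfl (by linarith) (a := ε/2 * ((m:ℝ)+1)) (by positivity)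
    refine le_trans this (le_of_eq ?_)
    congr 1
    congr 1
    rw [sub_zero]
    field_simp
    ring
  have hmE : ∀ p : ℕ × ℕ, μ (E p) ≤ ENNReal.ofReal ((2:ℝ)^p.2 *
      (Real.sqrt 2 * Real.exp (-((ε^2/256) * (((p.1:ℝ)+1)^2 * (9/8)^p.2))))) := by
    rintro ⟨m, k⟩
    have hq : (0:ℝ) < (2:ℝ)⁻¹^k := by positivity
    have h1 : (0:ℝ) ≤ (m:ℝ) := Nat.cast_nonneg m
    calc μ (E (m, k)) ≤ ∑ j ∈ Finset.range (2^k), μ {ω | ε * (3/4)^k/8 * ((m:ℝ)+1) ≤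
          |B (((m:ℝ)+1) + ((j:ℝ)+1)*(2:ℝ)⁻¹^k) ω - B (((m:ℝ)+1) + (j:ℝ)*(2:ℝ)⁻¹^k) ω|} := by
          rw [hE]
          exact measure_biUnion_finset_le _ _
      _ ≤ ∑ _j ∈ Finset.range (2^k), ENNReal.ofReal
          (Real.sqrt 2 * Real.exp (-((ε^2/256) * (((m:ℝ)+1)^2 * (9/8)^k)))) := by
          apply Finset.sum_le_sum
          intro j _
          have hj0 : (0:ℝ) ≤ (j:ℝ) := Nat.cast_nonneg j
          have hs0 : (0:ℝ) ≤ ((m:ℝ)+1) + (j:ℝ)*(2:ℝ)⁻¹^k := by positivity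
          have hst : ((m:ℝ)+1) + (j:ℝ)*(2:ℝ)⁻¹^k < ((m:ℝ)+1) + ((j:ℝ)+1)*(2:ℝ)⁻¹^k := by
            nlinarith
          have := incr_tail hB hs0 hst (a := ε * (3/4)^k/8 * ((m:ℝ)+1)) (by positivity)
          refine le_trans this (le_of_eq ?_)
          congr 2
          rw [Real.exp_eq_exp]
          have hd : (((m:ℝ)+1) + ((j:ℝ)+1)*(2:ℝ)⁻¹^k) - (((m:ℝ)+1) + (j:ℝ)*(2:ℝ)⁻¹^k) = (2:ℝ)⁻¹^k := by
            ring
          have e0 : (2:ℝ)⁻¹^k = ((2:ℝ)^k)⁻¹ := by rw [inv_pow]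
          have e1 : ((3:ℝ)/4)^k * ((3:ℝ)/4)^k = (9/16:ℝ)^k := by rw [← mul_pow]; norm_num
          have e2 : ((9:ℝ)/16)^k * (2:ℝ)^k = (9/8:ℝ)^k := by rw [← mul_pow]; norm_num
          rw [hd, e0, div_eq_iff (by positivity : (4:ℝ)*((2:ℝ)^k)⁻¹ ≠ 0), ← e2, ← e1]
          field_simp
          ring
      _ = ENNReal.ofReal ((2:ℝ)^k *
          (Real.sqrt 2 * Real.exp (-((ε^2/256) * (((m:ℝ)+1)^2 * (9/8)^k))))) := by
          rw [Finset.sum_const, Finset.card_range, nsmul_eq_mul]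
          rw [show ((2^k : ℕ) : ℝ≥0∞) = ENNReal.ofReal ((2:ℝ)^k) by
            rw [← ENNReal.ofReal_natCast (2^k)]; norm_num]
          rw [← ENNReal.ofReal_mul (by positivity)]
  -- Borel-Cantelli for A
  have hbcA : ∀ᵐ ω ∂μ, ∀ᶠ m in atTop, ω ∉ A m := by
    apply MeasureTheory.ae_eventually_notMem
    have hsum : Summable (fun m : ℕ => Real.sqrt 2 * Real.exp (-(ε^2/16) * ((m:ℝ)+1))) := by
      apply Summable.mul_left
      have : ∀ m : ℕ, Real.exp (-(ε^2/16) * ((m:ℝ)+1)) = (Real.exp (-(ε^2/16)))^(m+1) := by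
        intro m
        rw [← Real.exp_nat_mul]
        congr 1
        push_cast; ring
      apply Summable.congr _ (fun m => (this m).symm)
      apply Summable.comp_injective (summable_geometric_of_lt_one (Real.exp_pos _).le
        (Real.exp_lt_one_iff.2 (neg_lt_zero.2 (by positivity)))) (add_left_injective 1)
    have := ENNReal.ofReal_tsum_of_nonneg (fun m => by positivity) hsum
    apply ne_top_of_le_ne_top (b := ∑' m : ℕ, ENNReal.ofReal (Real.sqrt 2 * Real.exp (-(ε^2/16) * ((m:ℝ)+1))))
    · rw [← this]
      exact ENNReal.ofReal_ne_top
    · exact ENNReal.tsum_le_tsum hmA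
  -- Borel-Cantelli for E, via an equiv with ℕ
  have hbcE : ∀ᵐ ω ∂μ, ∃ N : ℕ, ∀ m k : ℕ, N ≤ m → ω ∉ E (m, k) := by
    set e : ℕ ≃ ℕ × ℕ := (Denumerable.eqv (ℕ × ℕ)).symm with he
    have hbc : ∀ᵐ ω ∂μ, ∀ᶠ n in atTop, ω ∉ E (e n) := by
      apply MeasureTheory.ae_eventually_notMem
      have hsum := sum_chain (ε^2/256) (by positivity)
      have hofreal := ENNReal.ofReal_tsum_of_nonneg (fun p : ℕ × ℕ => by positivity) hsum
      apply ne_top_of_le_ne_top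
        (b := ∑' p : ℕ × ℕ, ENNReal.ofReal ((2:ℝ)^p.2 * (Real.sqrt 2 * Real.exp (-((ε^2/256) * (((p.1:ℝ)+1)^2 * (9/8)^p.2))))))
      · rw [← hofreal]
        exact ENNReal.ofReal_ne_top
      · rw [← Equiv.tsum_eq e (fun p => ENNReal.ofReal ((2:ℝ)^p.2 * (Real.sqrt 2 * Real.exp (-((ε^2/256) * (((p.1:ℝ)+1)^2 * (9/8)^p.2))))))]
        exact ENNReal.tsum_le_tsum (fun n => hmE (e n))
    filter_upwards [hbc] with ω hω
    rw [eventually_atTop] at hω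
    obtain ⟨M, hM⟩ := hω
    refine ⟨(Finset.range M).sup (fun n => (e n).1) + 1, fun m k hm => ?_⟩
    intro hmem
    set n : ℕ := e.symm (m, k) with hn
    have hen : e n = (m, k) := by rw [hn, Equiv.apply_symm_apply]
    by_cases hnM : M ≤ n
    · exact hM n hnM (by rwa [hen])
    · push_neg at hnM
      have : (e n).1 ≤ (Finset.range M).sup (fun n => (e n).1) :=
        Finset.le_sup (f := fun n => (e n).1) (Finset.mem_range.2 hnM)
      rw [hen] at this
      omega
  filter_upwards [hbcA, hbcE] with ω h1 h2
  rw [eventually_atTop] at h1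
  obtain ⟨N1, hN1⟩ := h1
  obtain ⟨N2, hN2⟩ := h2
  refine ⟨max N1 N2, fun m hm => ⟨?_, ?_⟩⟩
  · have := hN1 m (le_trans (le_max_left _ _) hm)
    rw [hA] at this
    simp only [mem_setOf_eq, not_le] at this
    exact this.le
  · intro k j hj
    have := hN2 m k (le_trans (le_max_right _ _) hm)
    rw [hE] at this
    simp only [mem_iUnion, mem_setOf_eq, not_exists, not_le] at this
    exact (this j (Finset.mem_range.2 hj)).le


lemma bm_slln {Ω : Type*} [MeasurableSpace Ω] {μ : Measure Ω} [IsProbabilityMeasure μ]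
    {B : ℝ → Ω → ℝ} (hB : IsStandardBM μ B) :
    ∀ᵐ ω ∂μ, Tendsto (fun s => B s ω / s) atTop (nhds 0) := by
  have hkey : ∀ᵐ ω ∂μ, ∀ i : ℕ, ∃ N : ℕ, ∀ m : ℕ, N ≤ m →
      (|B ((m:ℝ)+1) ω - B 0 ω| ≤ (1/((i:ℝ)+1))/2 * ((m:ℝ)+1)) ∧
      (∀ k j : ℕ, j < 2^k →
        |B (((m:ℝ)+1) + ((j:ℝ)+1)*(2:ℝ)⁻¹^k) ω - B (((m:ℝ)+1) + (j:ℝ)*(2:ℝ)⁻¹^k) ω|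
          ≤ (1/((i:ℝ)+1)) * (3/4)^k/8 * ((m:ℝ)+1)) := by
    rw [ae_all_iff]
    intro i
    exact bc_events hB (1/((i:ℝ)+1)) (by positivity)
  filter_upwards [hB.cont, hB.init, hkey] with ω hc h0 hk
  rw [Metric.tendsto_atTop]
  intro ε hε
  obtain ⟨i, hi⟩ := exists_nat_one_div_lt hε
  obtain ⟨N, hN⟩ := hk i
  refine ⟨(N:ℝ) + 2, fun s hs => ?_⟩
  have hb := det_bound (fun t => B t ω) hc h0 (1/((i:ℝ)+1)) (by positivity) N hN s hs
  have hs0 : (0:ℝ) < s := by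
    have : (0:ℝ) ≤ N := Nat.cast_nonneg N
    linarith
  rw [Real.dist_eq, sub_zero, abs_div, abs_of_pos hs0]
  calc |B s ω| / s ≤ (1/((i:ℝ)+1)) * s / s :=
        div_le_div_of_nonneg_right hb hs0.le
    _ = 1/((i:ℝ)+1) := by field_simp
    _ < ε := hi

/-- Pinning of the Brownian-motion representation of a Gauss–Markov bridge at
the horizon: `X_t = α(t) + β_T(t)((z−α(T))γ_T(t) + B_{γ_T(t)} + (x−α(0))/β_T(0))`
converges a.s. to `z` as `t → T⁻`. -/
theorem GMB_pins_at_horizon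
    {Ω : Type*} [MeasurableSpace Ω] (μ : Measure Ω) [IsProbabilityMeasure μ]
    (B : ℝ → Ω → ℝ) (hB : IsStandardBM μ B)
    (T x z : ℝ) (hT : 0 < T) (α β γ : ℝ → ℝ)
    (hβpos : ∀ t ∈ Ico (0 : ℝ) T, 0 < β t)
    (hγmono : StrictMonoOn γ (Ico 0 T)) (hγ0 : γ 0 = 0)
    (hγtop : Tendsto γ (nhdsWithin T (Iio T)) atTop)
    (hβγ : Tendsto (fun t => β t * γ t) (nhdsWithin T (Iio T)) (nhds 1))
    (hα : ContinuousOn α (Icc 0 T))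
    (X : ℝ → Ω → ℝ)
    (hX : ∀ t ∈ Ico (0 : ℝ) T, ∀ ω,
      X t ω = α t + β t * ((z - α T) * γ t + B (γ t) ω + (x - α 0) / β 0)) :
    ∀ᵐ ω ∂μ, Tendsto (fun t => X t ω) (nhdsWithin T (Iio T)) (nhds z) := by
  filter_upwards [bm_slln hB] with ω hslln
  set c : ℝ := (x - α 0) / β 0 with hc
  -- eventual facts
  have hev1 : ∀ᶠ t in nhdsWithin T (Iio T), t ∈ Ico (0:ℝ) T := by
    have h2 : ∀ᶠ t in nhdsWithin T (Iio T), 0 < t :=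
      eventually_nhdsWithin_of_eventually_nhds (eventually_gt_nhds hT)
    filter_upwards [h2, self_mem_nhdsWithin] with t ht1 ht2
    exact ⟨ht1.le, ht2⟩
  have hev2 : ∀ᶠ t in nhdsWithin T (Iio T), (1:ℝ) ≤ γ t := hγtop.eventually_ge_atTop 1
  -- limits of the pieces
  have hαT : Tendsto α (nhdsWithin T (Iio T)) (nhds (α T)) := by
    have h1 : ContinuousWithinAt α (Icc 0 T) T := hα T (right_mem_Icc.2 hT.le)
    have h2 : ContinuousWithinAt α (Ico 0 T) T := h1.mono Ico_subset_Icc_self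
    have h3 := h2.tendsto
    rwa [nhdsWithin_Ico_eq_nhdsLT hT] at h3
  have hBg : Tendsto (fun t => B (γ t) ω / γ t) (nhdsWithin T (Iio T)) (nhds 0) :=
    hslln.comp hγtop
  have hγinv : Tendsto (fun t => (γ t)⁻¹) (nhdsWithin T (Iio T)) (nhds 0) :=
    tendsto_inv_atTop_zero.comp hγtop
  have hβ : Tendsto β (nhdsWithin T (Iio T)) (nhds 0) := by
    have h1 : Tendsto (fun t => (β t * γ t) * (γ t)⁻¹) (nhdsWithin T (Iio T)) (nhds (1 * 0)) :=
      hβγ.mul hγinv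
    rw [one_mul] at h1
    apply h1.congr'
    filter_upwards [hev2] with t ht
    have hne : γ t ≠ 0 := by linarith
    field_simp
  have hmain : Tendsto (fun t => α t + ((β t * γ t) * (z - α T) +
      ((β t * γ t) * (B (γ t) ω / γ t) + β t * c))) (nhdsWithin T (Iio T))
      (nhds (α T + (1 * (z - α T) + (1 * 0 + 0 * c)))) := by
    exact hαT.add (((hβγ.mul tendsto_const_nhds)).add
      ((hβγ.mul hBg).add (hβ.mul tendsto_const_nhds)))
  have hval : α T + (1 * (z - α T) + (1 * 0 + 0 * c)) = z := by ring
  rw [hval] at hmain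
  apply hmain.congr'
  filter_upwards [hev1, hev2] with t ht1 ht2
  have hne : γ t ≠ 0 := by linarith
  rw [hX t ht1 ω]
  have : β t * ((z - α T) * γ t + B (γ t) ω + c)
      = (β t * γ t) * (z - α T) + ((β t * γ t) * (B (γ t) ω / γ t) + β t * c) := by
    field_simp
    ring
  rw [this]
end
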